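/- Let T be a triangulated category and G an object of T. Suppose that for every object X of T there is a morphism ν_X : X_G → X with X_G ∈ ⟨G⟩_0 such that every morphism g : Y → X with Y ∈ ⟨G⟩_0 factors as g = ν_X ∘ h for some h : Y → X_G. If X ∉ ⟨G⟩_{t-1}, then there exists a sequence of morphisms f_i : X_{i-1} → X_i, 1 ≤ i ≤ t, with X_0 = X, each f_i being G-ghost, and f_t ∘ ⋯ ∘ f_1 ≠ 0. -/

import Mathlib

open CategoryTheory Limits Pretriangulated

universe v u

namespace OrlovSpec

variable (C : Type u) [Category.{v} C] [HasZeroObject C] [HasShift C ℤ]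
  [Preadditive C] [∀ n : ℤ, (shiftFunctor C n).Additive] [Pretriangulated C]
  [HasBinaryBiproducts C]

/-- `clos0 S` is the smallest class of objects containing `S` that is closed under
isomorphisms, shifts, finite coproducts and direct summands: this is `⟨S⟩₀`. -/
inductive clos0 (S : Set C) : Set C
  | of {X : C} (hX : X ∈ S) : clos0 S X
  | iso {X Y : C} (e : X ≅ Y) (hX : clos0 S X) : clos0 S Y
  | shift {X : C} (n : ℤ) (hX : clos0 S X) : clos0 S (X⟦n⟧)
  | biprod {X Y : C} (hX : clos0 S X) (hY : clos0 S Y) : clos0 S (X ⊞ Y)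
  | summand {X Y : C} (r : X ⟶ Y) (s : Y ⟶ X) (hrs : r ≫ s = 𝟙 X) (hY : clos0 S Y) :
      clos0 S X

/-- `star A B` consists of the extensions of objects of `B` by objects of `A`,
i.e. objects `X` fitting in a distinguished triangle `X₁ ⟶ X ⟶ X₂ ⟶ X₁[1]` with
`X₁ ∈ A` and `X₂ ∈ B`. -/
def star (A B : Set C) : Set C :=
  {X | ∃ (X₁ X₂ : C) (f : X₁ ⟶ X) (g : X ⟶ X₂) (h : X₂ ⟶ X₁⟦(1 : ℤ)⟧),
    Triangle.mk f g h ∈ (distTriang C) ∧ X₁ ∈ A ∧ X₂ ∈ B}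

/-- The operation `A ⋄ B`: the closure under isomorphisms, shifts, finite coproducts
and summands of the class of extensions of objects of `B` by objects of `A`. -/
def diamond (A B : Set C) : Set C := clos0 C (star C A B)

/-- `gen S n = ⟨S⟩ₙ`, the objects generated from `S` using at most `n` cones. -/
def gen (S : Set C) : ℕ → Set C
  | 0 => clos0 C S
  | (n + 1) => diamond C (gen S n) (clos0 C S)

variable {C}

/-- A morphism `f : X ⟶ Y` is `G`-ghost if the induced map
`Hom(G⟦j⟧, X) → Hom(G⟦j⟧, Y)` is zero for all `j : ℤ`. -/
def IsGhost (G : C) {X Y : C} (f : X ⟶ Y) : Prop :=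
  ∀ (j : ℤ) (α : (G⟦j⟧ : C) ⟶ X), α ≫ f = 0

/-- Composition of a chain of morphisms `X 0 ⟶ X 1 ⟶ ⋯ ⟶ X t`. -/
def chainComp (X : ℕ → C) (f : ∀ i, X i ⟶ X (i + 1)) : ∀ t, X 0 ⟶ X t
  | 0 => 𝟙 _
  | (t + 1) => chainComp X f t ≫ f t

/-- `gen` is closed under direct summands at every level. -/
lemma gen_summand (G : C) (n : ℕ) {A B : C} (r : A ⟶ B) (s : B ⟶ A)
    (hrs : r ≫ s = 𝟙 A) (hB : B ∈ gen C ({G} : Set C) n) : A ∈ gen C ({G} : Set C) n := by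
  cases n with
  | zero => exact clos0.summand r s hrs hB
  | succ m => exact clos0.summand r s hrs hB

/-- Key induction: if the composite of `t+1` steps of the approximation tower kills
`z : Z ⟶ Xs 0`, then `z` factors through an object of `⟨G⟩_t`. -/
lemma key_factor (G : C) (Xs : ℕ → C) (XG : ℕ → C)
    (hXG : ∀ i, XG i ∈ gen C ({G} : Set C) 0)
    (ν : ∀ i, XG i ⟶ Xs i) (f : ∀ i, Xs i ⟶ Xs (i + 1))
    (w : ∀ i, Xs (i + 1) ⟶ (XG i)⟦(1 : ℤ)⟧)
    (hdist : ∀ i, Triangle.mk (ν i) (f i) (w i) ∈ distTriang C) :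
    ∀ (t : ℕ) (Z : C) (z : Z ⟶ Xs 0), z ≫ chainComp Xs f (t + 1) = 0 →
      ∃ (V : C) (_ : V ∈ gen C ({G} : Set C) t) (a : Z ⟶ V) (b : V ⟶ Xs 0),
        a ≫ b = z := by
  intro t
  induction t with
  | zero =>
    intro Z z hz
    have hz' : z ≫ f 0 = 0 := by simpa [chainComp] using hz
    obtain ⟨g, hg⟩ := Triangle.coyoneda_exact₂ _ (hdist 0) z hz'
    exact ⟨XG 0, hXG 0, g, ν 0, hg.symm⟩
  | succ t ih =>
    intro Z z hz
    have hc : (z ≫ chainComp Xs f (t + 1)) ≫ f (t + 1) = 0 := by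
      simpa [chainComp, Category.assoc] using hz
    obtain ⟨φ, hφ⟩ := Triangle.coyoneda_exact₂ _ (hdist (t + 1)) _ hc
    simp only [Triangle.mk_obj₁, Triangle.mk_mor₁] at hφ
    obtain ⟨φ, hφ⟩ : ∃ φ : Z ⟶ XG (t + 1), z ≫ chainComp Xs f (t + 1) = φ ≫ ν (t + 1) :=
      ⟨φ, hφ⟩
    -- hφ : z ≫ chainComp Xs f (t+1) = φ ≫ ν (t+1)
    obtain ⟨F, p, q, hT1⟩ := distinguished_cocone_triangle₁ φ
    have hpφ : p ≫ φ = 0 := comp_distTriang_mor_zero₁₂ _ hT1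
    have hpz : (p ≫ z) ≫ chainComp Xs f (t + 1) = 0 := by
      rw [Category.assoc, hφ, ← Category.assoc, hpφ, zero_comp]
    obtain ⟨V, hV, α, β, hab⟩ := ih F (p ≫ z) hpz
    obtain ⟨W, γ, ε, hT2⟩ := distinguished_cocone_triangle₂ (q ≫ α⟦(1 : ℤ)⟧')
    have hW : W ∈ gen C ({G} : Set C) (t + 1) :=
      clos0.of ⟨V, XG (t + 1), γ, ε, _, hT2, hV, hXG (t + 1)⟩
    -- complete (α, ?, 𝟙) to a morphism of triangles
    obtain ⟨σ, hσ1, hσ2⟩ := complete_distinguished_triangle_morphism₂ _ _ hT1 hT2 α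
      (𝟙 (XG (t + 1))) (Category.id_comp _).symm
    change Z ⟶ W at σ
    simp only [Triangle.mk_mor₁, Triangle.mk_mor₂] at hσ1 hσ2
    replace hσ1 : p ≫ σ = α ≫ γ := hσ1
    replace hσ2 : φ ≫ 𝟙 (XG (t + 1)) = σ ≫ ε := hσ2
    -- hσ1 : p ≫ σ = α ≫ γ ; hσ2 : φ ≫ 𝟙 = σ ≫ ε
    have hφσ : φ = σ ≫ ε := by simpa using hσ2
    -- extend β : V ⟶ Xs 0 along γ : V ⟶ W
    have hq : q ≫ p⟦(1 : ℤ)⟧' = 0 := comp_distTriang_mor_zero₃₁ _ hT1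
    have hmβ : (q ≫ α⟦(1 : ℤ)⟧') ≫ β⟦(1 : ℤ)⟧' = 0 := by
      rw [Category.assoc, ← Functor.map_comp, hab, Functor.map_comp, ← Category.assoc, hq,
        zero_comp]
    obtain ⟨g, hg⟩ := Triangle.yoneda_exact₂ _
      (rot_of_distTriang _ (rot_of_distTriang _ hT2)) (β⟦(1 : ℤ)⟧') hmβ
    simp only [Triangle.rotate_mor₂, Triangle.rotate_mor₁, Triangle.mk_mor₂,
      Triangle.mk_mor₃, Triangle.rotate_mor₃] at hg
    change W⟦(1 : ℤ)⟧ ⟶ (Xs 0)⟦(1 : ℤ)⟧ at g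
    replace hg : β⟦(1 : ℤ)⟧' = (-γ⟦(1 : ℤ)⟧') ≫ g := hg
    -- hg : β⟦1⟧' = (-γ⟦1⟧') ≫ g
    set ρ₀ : W ⟶ Xs 0 := (shiftFunctor C (1 : ℤ)).preimage (-g) with hρ₀
    have hγρ : γ ≫ ρ₀ = β := by
      apply (shiftFunctor C (1 : ℤ)).map_injective
      rw [Functor.map_comp, hρ₀, Functor.map_preimage, hg]
      simp
    have hd : p ≫ (z - σ ≫ ρ₀) = 0 := by
      rw [Preadditive.comp_sub, ← Category.assoc, hσ1, Category.assoc, hγρ, hab, sub_self]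
    obtain ⟨ξ, hξ⟩ := Triangle.yoneda_exact₂ _ hT1 (z - σ ≫ ρ₀) hd
    simp only [Triangle.mk_mor₂] at hξ
    change XG (t + 1) ⟶ Xs 0 at ξ
    replace hξ : z - σ ≫ ρ₀ = φ ≫ ξ := hξ
    -- hξ : z - σ ≫ ρ₀ = φ ≫ ξ
    refine ⟨W, hW, σ, ρ₀ + ε ≫ ξ, ?_⟩
    rw [Preadditive.comp_add, ← Category.assoc, ← hφσ, ← hξ]
    abel

/-- Converse to the ghost lemma: if `G`-approximations exist and `X ∉ ⟨G⟩_{t-1}`, then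
there is a chain of `t` `G`-ghost maps starting at `X` with nonzero total composition. -/
theorem exists_ghost_chain_of_not_mem_gen (G : C)
    (happrox : ∀ X : C, ∃ (XG : C) (_ : XG ∈ gen C ({G} : Set C) 0) (ν : XG ⟶ X),
      ∀ (Y : C), Y ∈ gen C ({G} : Set C) 0 → ∀ g : Y ⟶ X, ∃ h : Y ⟶ XG, h ≫ ν = g)
    (t : ℕ) (ht : 1 ≤ t) (X : C) (hX : X ∉ gen C ({G} : Set C) (t - 1)) :
    ∃ (Xs : ℕ → C) (f : ∀ i, Xs i ⟶ Xs (i + 1)),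
      Xs 0 = X ∧ (∀ i < t, IsGhost G (f i)) ∧ chainComp Xs f t ≠ 0 := by
  choose XG hXG ν hν using happrox
  have hcone : ∀ Y : C, ∃ (Z : C) (g : Y ⟶ Z) (h : Z ⟶ (XG Y)⟦(1 : ℤ)⟧),
      Triangle.mk (ν Y) g h ∈ distTriang C := fun Y => distinguished_cocone_triangle (ν Y)
  choose cone fmap w hdist using hcone
  refine ⟨fun n => Nat.rec X (fun _ Y => cone Y) n, fun i => fmap _, rfl, ?_, ?_⟩
  · intro i _ j α
    show α ≫ fmap (Nat.rec X (fun _ Y => cone Y) i) = 0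
    obtain ⟨h, hh⟩ := hν (Nat.rec X (fun _ Y => cone Y) i) (G⟦j⟧)
      (clos0.shift j (clos0.of rfl)) α
    have hz := comp_distTriang_mor_zero₁₂ _ (hdist (Nat.rec X (fun _ Y => cone Y) i))
    simp only [Triangle.mk_mor₁, Triangle.mk_mor₂] at hz
    rw [← hh, Category.assoc, show ν (Nat.rec X (fun _ Y => cone Y) i) ≫ fmap (Nat.rec X (fun _ Y => cone Y) i) = 0 from hz, comp_zero]
  · intro hzero
    apply hX
    obtain ⟨s, rfl⟩ : ∃ s, t = s + 1 := ⟨t - 1, (Nat.succ_pred_eq_of_pos ht).symm⟩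
    obtain ⟨V, hV, a, b, hab⟩ := key_factor G
      (fun n => Nat.rec X (fun _ Y => cone Y) n)
      (fun i => XG _) (fun i => hXG _) (fun i => ν _) (fun i => fmap _) (fun i => w _)
      (fun i => hdist _) s X (𝟙 X) (by rw [Category.id_comp, hzero])
    simpa using gen_summand G s a b hab hV

end OrlovSpec
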